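/- (Completeness of the robust encoding of a disjunction of two temporal counting propositions over mutually exclusive formulas.) Let N, τ, t ∈ ℕ, let m₁ ≥ 1 and m₂ ≥ 1, and let f₁, f₂ : Fin N → ℕ → Prop be per-robot satisfaction predicates that are mutually exclusive, i.e., for all n ∈ Fin N and s ∈ ℕ, not both f₁(n, s) and f₂(n, s) hold. Suppose: (i) the number of robots n such that f₁(n, t+k) holds for all k ∈ {0, …, τ} is < m₁; (ii) the number of robots n such that f₂(n, t+k) holds for all k ∈ {0, …, τ} is < m₂; and (iii) the number of robots n such that f₁(n, t+k) ∨ f₂(n, t+k) holds for all k ∈ {0, …, τ} is < m₁ + m₂ − 1. Then there exists a τ-window assignment g at t (t ≤ g(n) ≤ t + τ for all n) such that the number of robots n with f₁(n, g(n)) is < m₁ and the number of robots n with f₂(n, g(n)) is < m₂. -/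

import Mathlib

/-- Completeness of the robust encoding of a disjunction of two temporal
counting propositions over mutually exclusive formulas. -/
theorem robust_disjunction_encoding_complete (N τ t m₁ m₂ : ℕ)
    (hm₁ : 1 ≤ m₁) (hm₂ : 1 ≤ m₂)
    (f₁ f₂ : Fin N → ℕ → Prop)
    [∀ n s, Decidable (f₁ n s)] [∀ n s, Decidable (f₂ n s)]
    (hexcl : ∀ (n : Fin N) (s : ℕ), ¬ (f₁ n s ∧ f₂ n s))
    (h1 : (Finset.univ.filter (fun n : Fin N => ∀ k ≤ τ, f₁ n (t + k))).card < m₁)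
    (h2 : (Finset.univ.filter (fun n : Fin N => ∀ k ≤ τ, f₂ n (t + k))).card < m₂)
    (h12 : (Finset.univ.filter
        (fun n : Fin N => ∀ k ≤ τ, f₁ n (t + k) ∨ f₂ n (t + k))).card <
      m₁ + m₂ - 1) :
    ∃ g : Fin N → ℕ,
      (∀ n, t ≤ g n ∧ g n ≤ t + τ) ∧
        (Finset.univ.filter (fun n : Fin N => f₁ n (g n))).card < m₁ ∧
        (Finset.univ.filter (fun n : Fin N => f₂ n (g n))).card < m₂ := by
  classical
  set A := Finset.univ.filter (fun n : Fin N => ∀ k ≤ τ, f₁ n (t + k)) with hA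
  set B := Finset.univ.filter (fun n : Fin N => ∀ k ≤ τ, f₂ n (t + k)) with hB
  set C := Finset.univ.filter (fun n : Fin N => ∀ k ≤ τ, f₁ n (t + k) ∨ f₂ n (t + k)) with hC
  set M := C \ (A ∪ B) with hM
  have hAB : Disjoint A B := by
    rw [Finset.disjoint_left]
    intro n hnA hnB
    simp only [hA, hB, Finset.mem_filter] at hnA hnB
    exact hexcl n t ⟨by simpa using hnA.2 0 (Nat.zero_le _),
      by simpa using hnB.2 0 (Nat.zero_le _)⟩
  have hAC : A ⊆ C := by
    intro n hn
    simp only [hA, hC, Finset.mem_filter] at *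
    exact ⟨hn.1, fun k hk => Or.inl (hn.2 k hk)⟩
  have hBC : B ⊆ C := by
    intro n hn
    simp only [hB, hC, Finset.mem_filter] at *
    exact ⟨hn.1, fun k hk => Or.inr (hn.2 k hk)⟩
  have hABC : A ∪ B ⊆ C := Finset.union_subset hAC hBC
  have hCcard : C.card = A.card + B.card + M.card := by
    have hle := Finset.card_le_card hABC
    rw [Finset.card_union_of_disjoint hAB] at hle
    rw [hM, Finset.card_sdiff_of_subset hABC, Finset.card_union_of_disjoint hAB]
    omega
  obtain ⟨S, hSM, hScard⟩ := Finset.exists_subset_card_eq (s := M) (n := min M.card (m₁ - 1 - A.card))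
    (Nat.min_le_left _ _)
  -- per-robot choice of time
  have hexists : ∀ n : Fin N, ∃ s : ℕ, t ≤ s ∧ s ≤ t + τ ∧
      (f₁ n s → n ∈ A ∪ S) ∧ (f₂ n s → n ∈ B ∪ (M \ S)) := by
    intro n
    by_cases hnA : n ∈ A
    · refine ⟨t, le_refl _, Nat.le_add_right _ _, fun _ => Finset.mem_union_left _ hnA, ?_⟩
      intro hf2
      exact absurd ⟨by simpa using (Finset.mem_filter.mp hnA).2 0 (Nat.zero_le _), hf2⟩
        (hexcl n t)
    · by_cases hnS : n ∈ S
      · have hnM := hSM hnS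
        have hnB : n ∉ B := by
          intro hnB
          exact (Finset.mem_sdiff.mp hnM).2 (Finset.mem_union_right _ hnB)
        simp only [hB, Finset.mem_filter, Finset.mem_univ, true_and, not_forall] at hnB
        obtain ⟨k, hk, hnf2⟩ := hnB
        refine ⟨t + k, Nat.le_add_right _ _, by omega,
          fun _ => Finset.mem_union_right _ hnS, fun hf2 => absurd hf2 hnf2⟩
      · by_cases hnC : n ∈ C
        · -- n ∈ C, not in A, not in S; pick a time where ¬f₁
          have hmem : n ∈ B ∪ (M \ S) := by
            by_cases hnB : n ∈ B
            · exact Finset.mem_union_left _ hnB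
            · refine Finset.mem_union_right _ (Finset.mem_sdiff.mpr ⟨?_, hnS⟩)
              exact Finset.mem_sdiff.mpr ⟨hnC, by
                simp only [Finset.mem_union]; tauto⟩
          simp only [hA, Finset.mem_filter, Finset.mem_univ, true_and, not_forall] at hnA
          obtain ⟨k, hk, hnf1⟩ := hnA
          exact ⟨t + k, Nat.le_add_right _ _, by omega,
            fun hf1 => absurd hf1 hnf1, fun _ => hmem⟩
        · simp only [hC, Finset.mem_filter, Finset.mem_univ, true_and, not_forall] at hnC
          obtain ⟨k, hk, hn12⟩ := hnC
          push_neg at hn12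
          exact ⟨t + k, Nat.le_add_right _ _, by omega,
            fun hf1 => absurd hf1 hn12.1, fun hf2 => absurd hf2 hn12.2⟩
  choose g hg1 hg2 hg3 hg4 using hexists
  refine ⟨g, fun n => ⟨hg1 n, hg2 n⟩, ?_, ?_⟩
  · have hsub : Finset.univ.filter (fun n : Fin N => f₁ n (g n)) ⊆ A ∪ S := by
      intro n hn
      exact hg3 n (Finset.mem_filter.mp hn).2
    have := Finset.card_le_card hsub
    have hcu : (A ∪ S).card ≤ A.card + S.card := Finset.card_union_le _ _
    have hmin : min M.card (m₁ - 1 - A.card) ≤ m₁ - 1 - A.card := Nat.min_le_right _ _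
    omega
  · have hsub : Finset.univ.filter (fun n : Fin N => f₂ n (g n)) ⊆ B ∪ (M \ S) := by
      intro n hn
      exact hg4 n (Finset.mem_filter.mp hn).2
    have := Finset.card_le_card hsub
    have hcu : (B ∪ (M \ S)).card ≤ B.card + (M \ S).card := Finset.card_union_le _ _
    have hMS : (M \ S).card = M.card - S.card := Finset.card_sdiff_of_subset hSM
    have hmin : S.card = min M.card (m₁ - 1 - A.card) := hScard
    rcases Nat.le_total M.card (m₁ - 1 - A.card) with h | h
    · rw [min_eq_left h] at hmin
      omega
    · rw [min_eq_right h] at hmin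
      omega
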